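/- There exists C > 0 such that for all |ε|_∞ ≤ 1/2, all i ≥ 0 and all h of the form h(r)=f(r)+r g(r) with f Lipschitz and g bounded, |Q_ε^i h(r)| ≤ |f|_∞ + (r + C i)|g|_∞ for every r. -/

import Mathlib

/-- The cookie transition operator `Q_ε`. -/
noncomputable def Qeps (ε : ℕ → ℝ) (f : ℕ → ℝ) (r : ℕ) : ℝ :=
  ∑' ℓ : ℕ, f (r + ℓ + 1) *
    ((2 : ℝ) ^ (-(ℓ + 1 : ℤ)) * (∏ i ∈ Finset.range ℓ, (1 + ε (r + i + 1)))
      * (1 - ε (r + ℓ + 1)))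

lemma qeps_step (ε : ℕ → ℝ) (hε : ∀ i, |ε i| ≤ 1 / 2) (H : ℕ → ℝ) (A B : ℝ)
    (hB : 0 ≤ B) (hH : ∀ r : ℕ, |H r| ≤ A + r * B) (r : ℕ) :
    |Qeps ε H r| ≤ A + r * B + 12 * B := by
  set P : ℕ → ℝ := fun n => ∏ i ∈ Finset.range n, ((1 + ε (r + i + 1)) / 2) with hPdef
  set w : ℕ → ℝ := fun ℓ => (2 : ℝ) ^ (-(ℓ + 1 : ℤ)) *
      (∏ i ∈ Finset.range ℓ, (1 + ε (r + i + 1))) * (1 - ε (r + ℓ + 1)) with hwdef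
  have hεlo : ∀ i, -(1/2 : ℝ) ≤ ε i := fun i => (abs_le.mp (hε i)).1
  have hεhi : ∀ i, ε i ≤ (1/2 : ℝ) := fun i => (abs_le.mp (hε i)).2
  have hwP : ∀ ℓ, w ℓ = P ℓ * ((1 - ε (r + ℓ + 1)) / 2) := by
    intro ℓ
    have h2 : (2 : ℝ) ^ (-(ℓ + 1 : ℤ)) = ((1:ℝ)/2)^ℓ * (1/2) := by
      rw [show (-(ℓ + 1 : ℤ)) = -((ℓ + 1 : ℕ) : ℤ) by push_cast; ring,
        zpow_neg, zpow_natCast, pow_succ, mul_inv, ← inv_pow]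
      norm_num
    simp only [hwdef, hPdef, h2, Finset.prod_div_distrib, Finset.prod_const,
      Finset.card_range, div_pow, one_pow]
    field_simp
  have hPnn : ∀ n, 0 ≤ P n := by
    intro n
    refine Finset.prod_nonneg fun i _ => by nlinarith [hεlo (r + i + 1)]
  have hPle : ∀ n, P n ≤ (3/4 : ℝ)^n := by
    intro n
    calc P n ≤ ∏ i ∈ Finset.range n, (3/4 : ℝ) :=
          Finset.prod_le_prod (fun i _ => by nlinarith [hεlo (r + i + 1)])
            (fun i _ => by nlinarith [hεhi (r + i + 1)])
      _ = (3/4 : ℝ)^n := by rw [Finset.prod_const, Finset.card_range]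
  have hw0 : ∀ ℓ, 0 ≤ w ℓ := by
    intro ℓ
    rw [hwP]
    have := hεhi (r + ℓ + 1)
    have := hPnn ℓ
    nlinarith
  have hwle : ∀ ℓ, w ℓ ≤ (3/4 : ℝ)^ℓ * (3/4) := by
    intro ℓ
    rw [hwP]
    have h1 := hεlo (r + ℓ + 1)
    have h2 := hPle ℓ
    have h3 := hPnn ℓ
    have h4 : (0:ℝ) ≤ (3/4:ℝ)^ℓ := by positivity
    nlinarith
  have hgeo : Summable (fun ℓ : ℕ => (3/4 : ℝ)^ℓ * (3/4)) :=
    (summable_geometric_of_lt_one (by norm_num) (by norm_num)).mul_right _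
  have hws : Summable w := Summable.of_nonneg_of_le hw0 hwle hgeo
  -- telescoping sum: HasSum w 1
  have hwsum : HasSum w 1 := by
    have hpart : ∀ n, ∑ ℓ ∈ Finset.range n, w ℓ = 1 - P n := by
      intro n
      have : ∀ ℓ, w ℓ = P ℓ - P (ℓ + 1) := by
        intro ℓ
        rw [hwP]
        have : P (ℓ + 1) = P ℓ * ((1 + ε (r + ℓ + 1)) / 2) := Finset.prod_range_succ _ _
        rw [this]; ring
      rw [Finset.sum_congr rfl fun ℓ _ => this ℓ, Finset.sum_range_sub' P]
      simp [hPdef]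
    have hP0 : Filter.Tendsto P Filter.atTop (nhds 0) := by
      refine squeeze_zero hPnn hPle ?_
      exact tendsto_pow_atTop_nhds_zero_of_lt_one (by norm_num) (by norm_num)
    have h1 : Filter.Tendsto (fun n => ∑ ℓ ∈ Finset.range n, w ℓ) Filter.atTop (nhds 1) := by
      simp only [hpart]
      have := hP0.const_sub 1
      simpa using this
    have h2 := hws.hasSum.tendsto_sum_nat
    have : (∑' ℓ, w ℓ) = 1 := tendsto_nhds_unique h2 h1
    rw [← this]; exact hws.hasSum
  -- sum of (ℓ+1) * w ℓ bounded by 12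
  have hg16 : HasSum (fun ℓ : ℕ => ((ℓ:ℝ) + 1) * (3/4 : ℝ)^ℓ * (3/4)) 12 := by
    have h1 : HasSum (fun n : ℕ => (n:ℝ) * (3/4 : ℝ)^n) 12 := by
      have h := hasSum_coe_mul_geometric_of_norm_lt_one
        (r := (3/4 : ℝ)) (by rw [Real.norm_eq_abs, abs_of_nonneg] <;> norm_num)
      have e : (3/4 : ℝ) / (1 - 3/4)^2 = 12 := by norm_num
      rwa [e] at h
    have h2 : HasSum (fun n : ℕ => (3/4 : ℝ)^n) 4 := by
      have h := hasSum_geometric_of_lt_one (r := (3/4 : ℝ)) (by norm_num) (by norm_num)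
      have e : ((1 : ℝ) - 3/4)⁻¹ = 4 := by norm_num
      rwa [e] at h
    have h3 := (h1.add h2).mul_right (3/4 : ℝ)
    have e3 : ((12 : ℝ) + 4) * (3/4) = 12 := by norm_num
    rw [e3] at h3
    have e : (fun ℓ : ℕ => ((ℓ:ℝ) + 1) * (3/4 : ℝ)^ℓ * (3/4)) =
        fun i : ℕ => ((i:ℝ) * (3/4 : ℝ)^i + (3/4 : ℝ)^i) * (3/4) := by
      funext n
      ring
    rw [e]; exact h3
  have hlw_le : ∀ ℓ : ℕ, ((ℓ:ℝ) + 1) * w ℓ ≤ ((ℓ:ℝ) + 1) * (3/4 : ℝ)^ℓ * (3/4) := by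
    intro ℓ
    have h : (0:ℝ) ≤ (ℓ:ℝ) + 1 := by positivity
    calc ((ℓ:ℝ) + 1) * w ℓ ≤ ((ℓ:ℝ) + 1) * ((3/4 : ℝ)^ℓ * (3/4)) :=
          mul_le_mul_of_nonneg_left (hwle ℓ) h
      _ = ((ℓ:ℝ) + 1) * (3/4 : ℝ)^ℓ * (3/4) := by ring
  have hlw0 : ∀ ℓ : ℕ, 0 ≤ ((ℓ:ℝ) + 1) * w ℓ := fun ℓ => by
    have := hw0 ℓ; positivity
  have hlws : Summable (fun ℓ : ℕ => ((ℓ:ℝ) + 1) * w ℓ) :=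
    Summable.of_nonneg_of_le hlw0 hlw_le hg16.summable
  have hlwsum : ∑' ℓ : ℕ, ((ℓ:ℝ) + 1) * w ℓ ≤ 12 := by
    have := Summable.tsum_le_tsum hlw_le hlws hg16.summable
    rwa [hg16.tsum_eq] at this
  -- bound the terms
  have hbound : ∀ ℓ : ℕ, |H (r + ℓ + 1) * w ℓ| ≤ (A + r * B) * w ℓ + B * (((ℓ:ℝ) + 1) * w ℓ) := by
    intro ℓ
    rw [abs_mul, abs_of_nonneg (hw0 ℓ)]
    have h1 : |H (r + ℓ + 1)| ≤ (A + r * B) + B * ((ℓ:ℝ) + 1) := by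
      have := hH (r + ℓ + 1)
      push_cast at this ⊢
      nlinarith
    nlinarith [hw0 ℓ, abs_nonneg (H (r + ℓ + 1))]
  have hrhs : Summable (fun ℓ : ℕ => (A + r * B) * w ℓ + B * (((ℓ:ℝ) + 1) * w ℓ)) :=
    (hws.mul_left _).add (hlws.mul_left _)
  have habs : Summable (fun ℓ : ℕ => |H (r + ℓ + 1) * w ℓ|) :=
    Summable.of_nonneg_of_le (fun ℓ => abs_nonneg _) hbound hrhs
  have hstep1 : |Qeps ε H r| ≤ ∑' ℓ : ℕ, |H (r + ℓ + 1) * w ℓ| := by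
    have hQ : Qeps ε H r = ∑' ℓ : ℕ, H (r + ℓ + 1) * w ℓ := rfl
    rw [hQ]
    have := norm_tsum_le_tsum_norm (f := fun ℓ : ℕ => H (r + ℓ + 1) * w ℓ)
      (by simpa only [Real.norm_eq_abs] using habs)
    simpa only [Real.norm_eq_abs] using this
  have hstep2 : ∑' ℓ : ℕ, |H (r + ℓ + 1) * w ℓ| ≤
      ∑' ℓ : ℕ, ((A + r * B) * w ℓ + B * (((ℓ:ℝ) + 1) * w ℓ)) :=
    Summable.tsum_le_tsum hbound habs hrhs
  have hstep3 : ∑' ℓ : ℕ, ((A + r * B) * w ℓ + B * (((ℓ:ℝ) + 1) * w ℓ)) =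
      (A + r * B) * (∑' ℓ, w ℓ) + B * (∑' ℓ : ℕ, ((ℓ:ℝ) + 1) * w ℓ) := by
    rw [Summable.tsum_add (hws.mul_left _) (hlws.mul_left _), tsum_mul_left, tsum_mul_left]
  have hwt : (∑' ℓ, w ℓ) = 1 := hwsum.tsum_eq
  calc |Qeps ε H r| ≤ (A + r * B) * (∑' ℓ, w ℓ) + B * (∑' ℓ : ℕ, ((ℓ:ℝ) + 1) * w ℓ) := by
        rw [← hstep3]; exact hstep1.trans hstep2
    _ ≤ (A + r * B) * 1 + B * 12 := by
        rw [hwt]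
        have : B * (∑' ℓ : ℕ, ((ℓ:ℝ) + 1) * w ℓ) ≤ B * 12 :=
          mul_le_mul_of_nonneg_left hlwsum hB
        linarith
    _ = A + r * B + 12 * B := by ring

theorem stmt_16 :
    ∃ C : ℝ, 0 < C ∧
      ∀ ε : ℕ → ℝ, (∀ i, |ε i| ≤ 1 / 2) →
        ∀ f g : ℕ → ℝ, ∀ Kf F M : ℝ, 0 ≤ Kf →
          (∀ r r' : ℕ, |f r - f r'| ≤ Kf * |(r : ℝ) - r'|) →
          (∀ r : ℕ, |f r| ≤ F) →
          (∀ r : ℕ, |g r| ≤ M) →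
          ∀ i : ℕ, ∀ r : ℕ,
            |(Qeps ε)^[i] (fun r => f r + r * g r) r| ≤ F + ((r : ℝ) + C * i) * M := by
  refine ⟨12, by norm_num, ?_⟩
  intro ε hε f g Kf F M _ _ hF hM i
  have hM0 : 0 ≤ M := le_trans (abs_nonneg _) (hM 0)
  induction i with
  | zero =>
    intro r
    simp only [Function.iterate_zero, id_eq]
    have h1 : |f r + (r:ℝ) * g r| ≤ F + (r:ℝ) * M := by
      have ha : |f r + (r:ℝ) * g r| ≤ |f r| + |(r:ℝ) * g r| := abs_add_le _ _
      have hb : |(r:ℝ) * g r| = (r:ℝ) * |g r| := by rw [abs_mul, Nat.abs_cast]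
      have hc : (r:ℝ) * |g r| ≤ (r:ℝ) * M :=
        mul_le_mul_of_nonneg_left (hM r) (Nat.cast_nonneg r)
      have := hF r
      linarith [hb ▸ ha]
    have h2 : F + ((r:ℝ) + 12 * ((0:ℕ):ℝ)) * M = F + (r:ℝ) * M := by push_cast; ring
    rw [h2]
    exact h1
  | succ i ih =>
    intro r
    rw [Function.iterate_succ_apply']
    have key := qeps_step ε hε ((Qeps ε)^[i] (fun r => f r + r * g r))
      (F + 12 * i * M) M hM0 (fun r' => by
        have := ih r'
        push_cast at this ⊢
        linarith [this]) r
    push_cast at key ⊢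
    linarith
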